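/- There is an absolute constant C such that for every N ∈ ℝ \ {0} and every x ≥ 0, |∫_x^∞ e^{iNy} y^{-1/2} dy| ≤ C |N|^{-1/2} (1 + |N| x)^{-1/2}, where the integral is understood as an improper (oscillatory) integral. -/

import Mathlib

open MeasureTheory Filter Set intervalIntegral

noncomputable def ff (N y : ℝ) : ℂ :=
  Complex.exp (Complex.I * (N : ℂ) * (y : ℂ)) * ((y ^ (-(1:ℝ) / 2) : ℝ) : ℂ)

lemma ff_norm (N y : ℝ) : ‖ff N y‖ = |y ^ (-(1:ℝ) / 2)| := by
  simp [ff, Complex.norm_exp]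

lemma ff_meas (N : ℝ) : Measurable (ff N) := by unfold ff; fun_prop

lemma ff_integrable (N c d : ℝ) : IntervalIntegrable (ff N) volume c d := by
  refine (intervalIntegrable_rpow' (a := c) (b := d) (r := -(1:ℝ)/2) (by norm_num)).mono_fun
    ((ff_meas N).aestronglyMeasurable.restrict) ?_
  filter_upwards with y
  rw [ff_norm, Real.norm_eq_abs]

lemma head (N : ℝ) {x a : ℝ} (hx : 0 ≤ x) (hxa : x ≤ a) :
    ‖∫ y in x..a, ff N y‖ ≤ 2 * a ^ ((1:ℝ)/2) := by
  have h0a : 0 ≤ a := hx.trans hxa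
  calc ‖∫ y in x..a, ff N y‖ ≤ ∫ y in x..a, ‖ff N y‖ :=
        intervalIntegral.norm_integral_le_integral_norm hxa
    _ = ∫ y in x..a, y ^ (-(1:ℝ)/2) := by
        refine intervalIntegral.integral_congr fun y hy => ?_
        rw [Set.uIcc_of_le hxa] at hy
        rw [ff_norm, abs_of_nonneg (Real.rpow_nonneg (hx.trans hy.1) _)]
    _ = (a ^ ((1:ℝ)/2) - x ^ ((1:ℝ)/2)) / ((1:ℝ)/2) := by
        rw [integral_rpow (Or.inl (by norm_num))]
        norm_num
    _ ≤ 2 * a ^ ((1:ℝ)/2) := by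
        have := Real.rpow_nonneg hx ((1:ℝ)/2)
        linarith

lemma tail (N : ℝ) (hN : N ≠ 0) {a : ℝ} (ha : 0 < a) :
    ∃ L : ℂ, Tendsto (fun T => ∫ y in a..T, ff N y) atTop (nhds L) ∧
      ‖L‖ ≤ 2 * a ^ (-(1:ℝ)/2) / |N| := by
  set c : ℂ := Complex.I * N with hc_def
  have hc : c ≠ 0 := by simp [hc_def, Complex.I_ne_zero, hN]
  set u : ℝ → ℂ := fun y => ((y ^ (-(1:ℝ)/2) : ℝ) : ℂ) with hu_def
  set u' : ℝ → ℂ := fun y => ((-(1:ℝ)/2 * y ^ (-(3:ℝ)/2) : ℝ) : ℂ) with hu'_def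
  set v : ℝ → ℂ := fun y => Complex.exp (c * y) / c with hv_def
  set v' : ℝ → ℂ := fun y => Complex.exp (c * y) with hv'_def
  have hexp : ∀ y : ℝ, ‖Complex.exp (c * y)‖ = 1 := by
    intro y
    simp [hc_def, mul_assoc, Complex.norm_exp]
  have hcnorm : ‖c‖ = |N| := by
    simp [hc_def]
  have hvnorm : ∀ y : ℝ, ‖v y‖ = 1 / |N| := by
    intro y
    rw [hv_def]
    rw [norm_div, hexp, hcnorm]
  have hunorm : ∀ y : ℝ, 0 ≤ y → ‖u y‖ = y ^ (-(1:ℝ)/2) := by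
    intro y hy
    rw [hu_def]
    simp [abs_of_nonneg (Real.rpow_nonneg hy _)]
  have hu'norm : ∀ y : ℝ, 0 ≤ y → ‖u' y‖ = (1/2) * y ^ (-(3:ℝ)/2) := by
    intro y hy
    rw [hu'_def]
    simp [abs_mul, abs_of_nonneg (Real.rpow_nonneg hy _)]
  have hderiv_u : ∀ y : ℝ, 0 < y → HasDerivAt u (u' y) y := by
    intro y hy
    have h := Real.hasDerivAt_rpow_const (x := y) (p := -(1:ℝ)/2) (Or.inl hy.ne')
    have h2 : (-(1:ℝ)/2) - 1 = -(3:ℝ)/2 := by norm_num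
    rw [h2] at h
    exact h.ofReal_comp
  have hderiv_v : ∀ y : ℝ, HasDerivAt v (v' y) y := by
    intro y
    have h0 : HasDerivAt (fun t : ℝ => (t : ℂ)) 1 y := by
      exact Complex.ofRealCLM.hasDerivAt (x := y)
    have h1 := ((h0.const_mul c).cexp).div_const c
    convert h1 using 1
    · rfl
    rw [hv'_def]
    field_simp
  -- integration by parts identity
  have key : ∀ T : ℝ, a ≤ T → (∫ y in a..T, ff N y)
      = u T * v T - u a * v a - ∫ y in a..T, u' y * v y := by
    intro T hT
    have huv : ∀ y ∈ Set.uIcc a T, HasDerivAt u (u' y) y := by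
      intro y hy
      rw [Set.uIcc_of_le hT] at hy
      exact hderiv_u y (lt_of_lt_of_le ha hy.1)
    have hvv : ∀ y ∈ Set.uIcc a T, HasDerivAt v (v' y) y := fun y _ => hderiv_v y
    have hu'i : IntervalIntegrable u' volume a T := by
      apply ContinuousOn.intervalIntegrable
      intro y hy
      rw [Set.uIcc_of_le hT] at hy
      have hy0 : y ≠ 0 := (lt_of_lt_of_le ha hy.1).ne'
      exact (Complex.continuous_ofReal.continuousAt.comp
        ((Real.continuousAt_rpow_const y _ (Or.inl hy0)).const_mul _)).continuousWithinAt
    have hv'i : IntervalIntegrable v' volume a T := by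
      apply Continuous.intervalIntegrable
      rw [hv'_def]
      fun_prop
    have h := intervalIntegral.integral_mul_deriv_eq_deriv_mul huv hvv hu'i hv'i
    rw [← h]
    refine intervalIntegral.integral_congr fun y _ => ?_
    rw [ff, hu_def, hv'_def, hc_def]
    ring
  -- boundary term tends to 0
  have hb : Tendsto (fun T => u T * v T) atTop (nhds 0) := by
    refine squeeze_zero_norm' (a := fun T => T ^ (-(1:ℝ)/2) * (1/|N|)) ?_ ?_
    · filter_upwards [eventually_ge_atTop (0:ℝ)] with T hT
      rw [norm_mul, hvnorm, hunorm T hT]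
    · have h1 : Tendsto (fun T : ℝ => T ^ (-(1:ℝ)/2)) atTop (nhds 0) := by
        have := tendsto_rpow_neg_atTop (y := (1:ℝ)/2) (by norm_num)
        simpa [neg_div] using this
      simpa using h1.mul_const (1/|N|)
  -- tail integrand is integrable on Ioi a
  have hGint : IntegrableOn (fun y : ℝ => y ^ (-(3:ℝ)/2) / (2 * |N|)) (Set.Ioi a) volume :=
    (integrableOn_Ioi_rpow_of_lt (by norm_num) ha).div_const _
  have hbd : ∀ᵐ y ∂(volume.restrict (Set.Ioi a)), ‖u' y * v y‖ ≤ y ^ (-(3:ℝ)/2) / (2 * |N|) := by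
    rw [ae_restrict_iff' measurableSet_Ioi]
    filter_upwards with y hy
    have hy0 : (0:ℝ) ≤ y := (ha.trans hy).le
    rw [norm_mul, hvnorm, hu'norm y hy0]
    apply le_of_eq
    ring
  have hmeas : AEStronglyMeasurable (fun y : ℝ => u' y * v y) (volume.restrict (Set.Ioi a)) := by
    apply Measurable.aestronglyMeasurable
    rw [hu'_def, hv_def]
    fun_prop
  have hInt : IntegrableOn (fun y : ℝ => u' y * v y) (Set.Ioi a) volume :=
    Integrable.mono' hGint hmeas hbd
  have hTailT : Tendsto (fun T : ℝ => ∫ y in a..T, u' y * v y) atTop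
      (nhds (∫ y in Set.Ioi a, u' y * v y)) :=
    intervalIntegral_tendsto_integral_Ioi a hInt tendsto_id
  refine ⟨0 - u a * v a - ∫ y in Set.Ioi a, u' y * v y, ?_, ?_⟩
  · refine ((hb.sub tendsto_const_nhds).sub hTailT).congr' ?_
    filter_upwards [eventually_ge_atTop a] with T hT
    exact (key T hT).symm
  · have hIoi : ‖∫ y in Set.Ioi a, u' y * v y‖ ≤ ∫ y in Set.Ioi a, y ^ (-(3:ℝ)/2) / (2 * |N|) :=
      norm_integral_le_of_norm_le hGint hbd
    have hval : ∫ y in Set.Ioi a, y ^ (-(3:ℝ)/2) / (2 * |N|)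
        = a ^ (-(1:ℝ)/2) / |N| := by
      have hN' : |N| ≠ 0 := abs_ne_zero.mpr hN
      rw [MeasureTheory.integral_div, integral_Ioi_rpow_of_lt (by norm_num) ha]
      have he : (-(3:ℝ)/2 + 1) = -(1:ℝ)/2 := by norm_num
      rw [he]
      field_simp
    have hua : ‖u a * v a‖ = a ^ (-(1:ℝ)/2) / |N| := by
      rw [norm_mul, hvnorm, hunorm a ha.le]
      ring
    calc ‖0 - u a * v a - ∫ y in Set.Ioi a, u' y * v y‖
        ≤ ‖0 - u a * v a‖ + ‖∫ y in Set.Ioi a, u' y * v y‖ := norm_sub_le _ _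
      _ ≤ a ^ (-(1:ℝ)/2) / |N| + a ^ (-(1:ℝ)/2) / |N| := by
          rw [zero_sub, norm_neg, hua]
          exact add_le_add le_rfl (hIoi.trans (le_of_eq hval))
      _ = 2 * a ^ (-(1:ℝ)/2) / |N| := by ring

lemma two_rpow_half : (1:ℝ)/2 ≤ (2:ℝ) ^ (-(1:ℝ)/2) := by
  have he : -(1:ℝ)/2 = -((1:ℝ)/2) := by norm_num
  rw [he, Real.rpow_neg (by norm_num)]
  have h2 : (2:ℝ) ^ ((1:ℝ)/2) ≤ 2 := by
    calc (2:ℝ) ^ ((1:ℝ)/2) ≤ (2:ℝ) ^ (1:ℝ) :=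
          Real.rpow_le_rpow_of_exponent_le one_le_two (by norm_num)
      _ = 2 := Real.rpow_one 2
  have hpos : (0:ℝ) < (2:ℝ) ^ ((1:ℝ)/2) := Real.rpow_pos_of_pos (by norm_num) _
  have h3 := inv_anti₀ hpos h2
  norm_num at h3
  linarith

lemma arith_small {s x : ℝ} (hs : 0 < s) (hx : 0 ≤ x) (h : s * x ≤ 1) :
    2 * (s⁻¹) ^ ((1:ℝ)/2) + 2 * (s⁻¹) ^ (-(1:ℝ)/2) / s
      ≤ 8 * s ^ (-(1:ℝ)/2) * (1 + s * x) ^ (-(1:ℝ)/2) := by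
  have he : -(1:ℝ)/2 = -((1:ℝ)/2) := by norm_num
  have e1 : (s⁻¹) ^ ((1:ℝ)/2) = s ^ (-(1:ℝ)/2) := by
    rw [he, Real.rpow_neg hs.le, ← Real.inv_rpow hs.le]
  have e2 : (s⁻¹) ^ (-(1:ℝ)/2) / s = s ^ (-(1:ℝ)/2) := by
    rw [he, Real.inv_rpow hs.le, ← Real.rpow_neg hs.le, neg_neg, div_eq_mul_inv,
      ← Real.rpow_neg_one s, ← Real.rpow_add hs]
    norm_num
  rw [e1, mul_div_assoc, e2]
  have hsx : 0 ≤ s * x := mul_nonneg hs.le hx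
  have hb : (1:ℝ)/2 ≤ (1 + s * x) ^ (-(1:ℝ)/2) := by
    refine two_rpow_half.trans ?_
    exact Real.rpow_le_rpow_of_nonpos (by linarith) (by linarith) (by norm_num)
  have hsp : (0:ℝ) ≤ s ^ (-(1:ℝ)/2) := Real.rpow_nonneg hs.le _
  nlinarith

lemma arith_large {s x : ℝ} (hs : 0 < s) (hx : 0 < x) (h : 1 ≤ s * x) :
    2 * x ^ (-(1:ℝ)/2) / s ≤ 8 * s ^ (-(1:ℝ)/2) * (1 + s * x) ^ (-(1:ℝ)/2) := by
  have h1 : (2*(s*x)) ^ (-(1:ℝ)/2) ≤ (1 + s*x) ^ (-(1:ℝ)/2) :=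
    Real.rpow_le_rpow_of_nonpos (by nlinarith) (by linarith) (by norm_num)
  have h2 : (2*(s*x)) ^ (-(1:ℝ)/2)
      = 2 ^ (-(1:ℝ)/2) * (s ^ (-(1:ℝ)/2) * x ^ (-(1:ℝ)/2)) := by
    rw [Real.mul_rpow (by norm_num) (by positivity), Real.mul_rpow hs.le hx.le]
  have h3 : s ^ (-(1:ℝ)/2) * s ^ (-(1:ℝ)/2) = s⁻¹ := by
    rw [← Real.rpow_add hs, show (-(1:ℝ)/2 + -(1:ℝ)/2) = -1 by norm_num, Real.rpow_neg_one]
  have h4 : (0:ℝ) ≤ s ^ (-(1:ℝ)/2) := Real.rpow_nonneg hs.le _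
  have h5 : (0:ℝ) ≤ x ^ (-(1:ℝ)/2) := Real.rpow_nonneg hx.le _
  have h6 : (0:ℝ) ≤ s⁻¹ := inv_nonneg.mpr hs.le
  calc 2 * x ^ (-(1:ℝ)/2) / s
      ≤ 4 * (s⁻¹ * x ^ (-(1:ℝ)/2)) := by
        rw [div_eq_mul_inv]
        nlinarith
    _ = 8 * (1/2) * (s ^ (-(1:ℝ)/2) * s ^ (-(1:ℝ)/2)) * x ^ (-(1:ℝ)/2) := by rw [h3]; ring
    _ ≤ 8 * (2:ℝ) ^ (-(1:ℝ)/2) * (s ^ (-(1:ℝ)/2) * s ^ (-(1:ℝ)/2)) * x ^ (-(1:ℝ)/2) := by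
        nlinarith [two_rpow_half, mul_nonneg (mul_nonneg h4 h4) h5]
    _ = 8 * s ^ (-(1:ℝ)/2) * (2 ^ (-(1:ℝ)/2) * (s ^ (-(1:ℝ)/2) * x ^ (-(1:ℝ)/2))) := by ring
    _ = 8 * s ^ (-(1:ℝ)/2) * (2*(s*x)) ^ (-(1:ℝ)/2) := by rw [h2]
    _ ≤ 8 * s ^ (-(1:ℝ)/2) * (1 + s*x) ^ (-(1:ℝ)/2) :=
        mul_le_mul_of_nonneg_left h1 (by positivity)


/-- There is an absolute constant `C` such that for every `N ≠ 0` and `x ≥ 0` the improper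
oscillatory integral `∫_x^∞ e^{iNy} y^{-1/2} dy` converges and its value `L` satisfies
`|L| ≤ C |N|^{-1/2} (1 + |N| x)^{-1/2}`. -/
theorem stmt_13 :
    ∃ C > (0:ℝ), ∀ N x : ℝ, N ≠ 0 → 0 ≤ x →
      ∃ L : ℂ,
        Filter.Tendsto
          (fun T : ℝ => ∫ y in x..T,
            Complex.exp (Complex.I * (N : ℂ) * (y : ℂ)) * ((y ^ (-(1:ℝ) / 2) : ℝ) : ℂ))
          Filter.atTop (nhds L) ∧
        ‖L‖ ≤ C * |N| ^ (-(1:ℝ) / 2) * (1 + |N| * x) ^ (-(1:ℝ) / 2) := by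
  refine ⟨8, by norm_num, ?_⟩
  intro N x hN hx
  have hNpos : 0 < |N| := abs_pos.mpr hN
  rcases le_total 1 (|N| * x) with hcase | hcase
  · have hxpos : 0 < x := by nlinarith [abs_nonneg N]
    obtain ⟨L, hT, hL⟩ := tail N hN hxpos
    exact ⟨L, hT, hL.trans (arith_large hNpos hxpos hcase)⟩
  · have hapos : 0 < |N|⁻¹ := inv_pos.mpr hNpos
    have hxa : x ≤ |N|⁻¹ := by
      rw [← one_div, le_div_iff₀ hNpos]
      linarith [mul_comm x |N|]
    obtain ⟨L₀, hT₀, hL₀⟩ := tail N hN hapos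
    refine ⟨(∫ y in x..(|N|⁻¹), ff N y) + L₀, ?_, ?_⟩
    · refine (tendsto_const_nhds.add hT₀).congr' ?_
      filter_upwards [eventually_ge_atTop (|N|⁻¹)] with T hT
      exact intervalIntegral.integral_add_adjacent_intervals
        (ff_integrable N x _) (ff_integrable N _ T)
    · calc ‖(∫ y in x..(|N|⁻¹), ff N y) + L₀‖
          ≤ ‖∫ y in x..(|N|⁻¹), ff N y‖ + ‖L₀‖ := norm_add_le _ _
        _ ≤ 2 * (|N|⁻¹) ^ ((1:ℝ)/2) + 2 * (|N|⁻¹) ^ (-(1:ℝ)/2) / |N| :=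
            add_le_add (head N hx hxa) hL₀
        _ ≤ 8 * |N| ^ (-(1:ℝ)/2) * (1 + |N| * x) ^ (-(1:ℝ)/2) :=
            arith_small hNpos hx hcase
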